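/- Fix permutations θ, θ̃ of ℤ*. For every N > 0 there exist a finite partial bijection ι^{vert} of the index set ℤ* × ℤ × {0,1} and a finite subset X ⊂ ℤ* such that: (i) ι^{vert} is independent from (S_N, S̃_N); (ii) ι^{vert} contains the pair (v_j, ṽ_j) (i.e. the index pair ((j,0,0),(j,0,0))) for every j ∈ X; (iii) for every tuple ω = (ρ, θ, ρ̃, θ̃, ι) in which ι extends ι^{vert}, there exists h ∈ G(ω) such that h^{-1} s h ∈ ⟨{v_j : j ∈ X}⟩ for every s ∈ S_N. -/

import Mathlib

/-- `ℤ* = ℤ \ {0}`. -/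
abbrev Zstar : Type := {n : ℤ // n ≠ 0}

/-- Index set for the free basis `S` (and `S̃`): `(j, l, b)` with `b = false` for `v_j^l`
and `b = true` for `w_j^l`. -/
abbrev SIdx : Type := Zstar × ℤ × Bool

/-- The free group on three generators `x, y, z`. -/
abbrev F3 : Type := FreeGroup (Fin 3)

/-- The generator `x`. -/
def gx : F3 := FreeGroup.of 0
/-- The generator `y`. -/
def gy : F3 := FreeGroup.of 1
/-- The generator `z`. -/
def gz : F3 := FreeGroup.of 2

/-- `v_j^l = z^{-l} x^j y^{-ρ(j)} z^l`. -/
def vgen (ρ : Equiv.Perm Zstar) (j : Zstar) (l : ℤ) : F3 :=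
  gz ^ (-l) * gx ^ j.val * gy ^ (-(ρ j).val) * gz ^ l

/-- `w_j^l = z^{-l} x^j z y^{-θ(j)} z^l`. -/
def wgen (θ : Equiv.Perm Zstar) (j : Zstar) (l : ℤ) : F3 :=
  gz ^ (-l) * gx ^ j.val * gz * gy ^ (-(θ j).val) * gz ^ l

/-- The element of `S` indexed by `(j, l, b)`. -/
def sElem (ρ θ : Equiv.Perm Zstar) (p : SIdx) : F3 :=
  if p.2.2 then wgen θ p.1 p.2.1 else vgen ρ p.1 p.2.1

/-- The canonical homomorphism from the free group on the index set of `S` to `F`,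
sending `(j,l,false) ↦ v_j^l` and `(j,l,true) ↦ w_j^l`. -/
def sMap (ρ θ : Equiv.Perm Zstar) : FreeGroup SIdx →* F3 :=
  FreeGroup.lift (sElem ρ θ)

/-- `H = ⟨S⟩ ≤ F`. -/
def Hsub (ρ θ : Equiv.Perm Zstar) : Subgroup F3 :=
  Subgroup.closure (Set.range (sElem ρ θ))

/-- The tuple `ω = (ρ, θ, ρ̃, θ̃, ι)`; the bijection `ι : S → S̃` is recorded as a bijection
of the index sets. -/
structure OmegaTuple : Type where
  ρ : Equiv.Perm Zstar
  θ : Equiv.Perm Zstar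
  ρt : Equiv.Perm Zstar
  θt : Equiv.Perm Zstar
  ι : SIdx ≃ SIdx

/-- The two maps from the abstract copy of `H` (the free group on the index set of `S`)
into the two copies of `F₃`: into `F` via `S`, and into `F̃` via `ι` followed by `S̃`. -/
def pushMaps (ω : OmegaTuple) : Bool → (FreeGroup SIdx →* F3) :=
  fun b => if b then (sMap ω.ρt ω.θt).comp (FreeGroup.map ω.ι) else sMap ω.ρ ω.θ

/-- `G(ω) = F *_{H = H̃} F̃`, the amalgamated product. -/
def GroupOmega (ω : OmegaTuple) : Type := Monoid.PushoutI (pushMaps ω)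

instance (ω : OmegaTuple) : Group (GroupOmega ω) := by
  delta GroupOmega; infer_instance

/-- The canonical map `F → G(ω)`. -/
def ofb (ω : OmegaTuple) : F3 →* GroupOmega ω := Monoid.PushoutI.of (φ := pushMaps ω) false

/-- The canonical map `F̃ → G(ω)`. -/
def oft (ω : OmegaTuple) : F3 →* GroupOmega ω := Monoid.PushoutI.of (φ := pushMaps ω) true

/-- `c_{l,j} = z^l x^j`. -/
def cElem (l j : ℤ) : F3 := gz ^ l * gx ^ j

/-- `d_{M,M'}^l = v_M^l (v_{M'}^l)⁻¹`. -/
def dElem (ρ : Equiv.Perm Zstar) (M M' : Zstar) (l : ℤ) : F3 :=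
  vgen ρ M l * (vgen ρ M' l)⁻¹

/-- The index `(j,l,b)` corresponds to an element of `S_N` (resp. `S̃_N`):
`j ∈ [-N,N] ∩ ℤ*` and `l ∈ [-N,N]`. -/
def InSN (N : ℤ) (p : SIdx) : Prop :=
  p.1.val ∈ Set.Icc (-N) N ∧ p.2.1 ∈ Set.Icc (-N) N

/-- A (total) map `g` extends a partial bijection `f`. -/
def Extends {α β : Type*} (g : α → β) (f : PartialEquiv α β) : Prop :=
  ∀ a ∈ f.source, g a = f a

/-- A partial bijection of `ℤ*` is independent from `[-N, N]`: its domain and image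
are disjoint from `[-N, N]`. -/
def IndepFromIcc (f : PartialEquiv Zstar Zstar) (N : ℤ) : Prop :=
  (∀ a ∈ f.source, a.val ∉ Set.Icc (-N) N) ∧ (∀ a ∈ f.target, a.val ∉ Set.Icc (-N) N)

/-- A partial bijection of the index set is independent from `(S_N, S̃_N)`:
its domain misses `S_N` and its image misses `S̃_N`. -/
def IndepFromSN (f : PartialEquiv SIdx SIdx) (N : ℤ) : Prop :=
  (∀ p ∈ f.source, ¬ InSN N p) ∧ (∀ p ∈ f.target, ¬ InSN N p)


namespace Stmt13Aux

noncomputable section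

/-- Encoding of a box index as a nonnegative integer (on the box). -/
def Ebase (N : ℤ) (p : SIdx) : ℤ :=
  (p.1.val + N) + (2*N+1) * (p.2.1 + N) + (2*N+1)^2 * (cond p.2.2 1 0)

def kap (N : ℤ) (p : SIdx) : ℤ := |N| + 1 + |Ebase N p|

lemma kap_pos (N : ℤ) (p : SIdx) : 0 < kap N p := by
  have h1 := abs_nonneg N; have h2 := abs_nonneg (Ebase N p); unfold kap; omega

def kz (N : ℤ) (p : SIdx) : Zstar := ⟨kap N p, by have := kap_pos N p; omega⟩
def mz (N : ℤ) (p : SIdx) : Zstar := ⟨-(kap N p), by have := kap_pos N p; omega⟩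

def fmap (N : ℤ) : SIdx → SIdx := fun q =>
  if q.2.1 = 0 then q
  else if 0 < q.2.1 then (kz N (q.1, q.2.1 - (2*N+1), q.2.2), 0, false)
  else (⟨-q.1.val, neg_ne_zero.mpr q.1.2⟩, N+1, false)

def BoxS (N : ℤ) : Set SIdx := {p | InSN N p}

def sh1 (N : ℤ) (p : SIdx) : SIdx := (p.1, p.2.1 + (2*N+1), p.2.2)
def m2 (N : ℤ) (p : SIdx) : SIdx := (mz N p, -(N+1), false)
def m3 (N : ℤ) (p : SIdx) : SIdx := (mz N p, 0, false)

def src (N : ℤ) : Set SIdx := (sh1 N '' BoxS N ∪ m2 N '' BoxS N) ∪ m3 N '' BoxS N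

lemma conj_sElem (ρ θ : Equiv.Perm Zstar) (p : SIdx) (a : ℤ) :
    (gz ^ a)⁻¹ * sElem ρ θ p * gz ^ a = sElem ρ θ (p.1, p.2.1 + a, p.2.2) := by
  obtain ⟨j, l, b⟩ := p
  cases b <;> simp only [sElem, vgen, wgen, cond, Bool.false_eq_true, if_false, if_true] <;> group

lemma push_rel (ω : OmegaTuple) (q : SIdx) :
    ofb ω (sElem ω.ρ ω.θ q) = oft ω (sElem ω.ρt ω.θt (ω.ι q)) := by
  have h := Monoid.PushoutI.of_comp_eq_base (φ := pushMaps ω) false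
  have h' := Monoid.PushoutI.of_comp_eq_base (φ := pushMaps ω) true
  have h2 := h.trans h'.symm
  have h3 := congrArg (fun (F : FreeGroup SIdx →* Monoid.PushoutI (pushMaps ω)) =>
    F (FreeGroup.of q)) h2
  simp [pushMaps, ofb, oft, sMap, FreeGroup.lift_apply_of, FreeGroup.map.of,
    MonoidHom.comp_apply] at h3 ⊢
  exact h3

end

end Stmt13Aux


namespace Stmt13Aux
noncomputable section
variable {N : ℤ}

lemma box_spec {p : SIdx} (hp : p ∈ BoxS N) :
    -N ≤ p.1.val ∧ p.1.val ≤ N ∧ -N ≤ p.2.1 ∧ p.2.1 ≤ N := by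
  obtain ⟨h1, h2⟩ := hp
  simp only [Set.mem_Icc] at h1 h2
  exact ⟨h1.1, h1.2, h2.1, h2.2⟩

lemma Ebase_nonneg (hN : 0 < N) {p : SIdx} (hp : p ∈ BoxS N) : 0 ≤ Ebase N p := by
  obtain ⟨b1, b2, b3, b4⟩ := box_spec hp
  have h1 : 0 ≤ (2*N+1) * (p.2.1 + N) := mul_nonneg (by omega) (by omega)
  have h2 : 0 ≤ (2*N+1)^2 * (cond p.2.2 1 0) := by
    apply mul_nonneg (sq_nonneg _); cases p.2.2 <;> simp
  unfold Ebase; omega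

lemma kap_eq (hN : 0 < N) {p : SIdx} (hp : p ∈ BoxS N) :
    kap N p = N + 1 + Ebase N p := by
  unfold kap
  rw [abs_of_pos hN, abs_of_nonneg (Ebase_nonneg hN hp)]

lemma kap_big (hN : 0 < N) {p : SIdx} (hp : p ∈ BoxS N) : N + 1 ≤ kap N p := by
  have := Ebase_nonneg hN hp; rw [kap_eq hN hp]; omega

lemma decode_aux {N j1 j2 l1 l2 d1 d2 : ℤ}
    (hb : -N ≤ j1 ∧ j1 ≤ N ∧ -N ≤ l1 ∧ l1 ≤ N ∧ -N ≤ j2 ∧ j2 ≤ N ∧ -N ≤ l2 ∧ l2 ≤ N)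
    (h : (j1 + N) + (2*N+1) * (l1 + N) + (2*N+1)^2 * d1
       = (j2 + N) + (2*N+1) * (l2 + N) + (2*N+1)^2 * d2) :
    j1 = j2 ∧ l1 = l2 ∧ d1 = d2 := by
  obtain ⟨a1, a2, a3, a4, c1, c2, c3, c4⟩ := hb
  have hdvd : (2*N+1) ∣ (j1 - j2) :=
    ⟨(l2 - l1) + (2*N+1)*(d2 - d1), by linear_combination h⟩
  have hj : j1 - j2 = 0 := Int.eq_zero_of_abs_lt_dvd hdvd (by rw [abs_lt]; omega)
  have hl0 : (2*N+1) * (l1 - l2 - (2*N+1)*(d2 - d1)) = 0 := by linear_combination h - hj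
  have hml : l1 - l2 - (2*N+1)*(d2 - d1) = 0 := by
    rcases mul_eq_zero.mp hl0 with h' | h'
    · omega
    · exact h'
  have hdvd2 : (2*N+1) ∣ (l1 - l2) := ⟨d2 - d1, by linear_combination hml⟩
  have hl : l1 - l2 = 0 :=
    Int.eq_zero_of_abs_lt_dvd hdvd2 (by rw [abs_lt]; omega)
  have hd0 : (2*N+1) * (d2 - d1) = 0 := by linear_combination -hml + hl
  rcases mul_eq_zero.mp hd0 with h' | h'
  · omega
  · exact ⟨by omega, by omega, by omega⟩

lemma Ebase_injOn (hN : 0 < N) {p q : SIdx} (hp : p ∈ BoxS N) (hq : q ∈ BoxS N)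
    (h : Ebase N p = Ebase N q) : p = q := by
  obtain ⟨a1, a2, a3, a4⟩ := box_spec hp
  obtain ⟨c1, c2, c3, c4⟩ := box_spec hq
  obtain ⟨hj, hl, hd⟩ := decode_aux ⟨a1, a2, a3, a4, c1, c2, c3, c4⟩ h
  have hb : p.2.2 = q.2.2 := by
    cases hp2 : p.2.2 <;> cases hq2 : q.2.2 <;> rw [hp2, hq2] at hd <;> simp_all
  exact Prod.ext (Subtype.ext hj) (Prod.ext hl hb)

lemma kap_injOn (hN : 0 < N) {p q : SIdx} (hp : p ∈ BoxS N) (hq : q ∈ BoxS N)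
    (h : kap N p = kap N q) : p = q := by
  rw [kap_eq hN hp, kap_eq hN hq] at h
  exact Ebase_injOn hN hp hq (by omega)

lemma fval1 (hN : 0 < N) {p : SIdx} (hp : p ∈ BoxS N) :
    fmap N (sh1 N p) = (kz N p, 0, false) := by
  obtain ⟨b1, b2, b3, b4⟩ := box_spec hp
  unfold fmap sh1
  rw [if_neg (show ¬ (p.2.1 + (2*N+1) = 0) by omega), if_pos (show 0 < p.2.1 + (2*N+1) by omega)]
  have hpe : ((p.1, p.2.1 + (2*N+1) - (2*N+1), p.2.2) : SIdx) = p :=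
    Prod.ext rfl (Prod.ext (show p.2.1 + (2*N+1) - (2*N+1) = p.2.1 by omega) rfl)
  rw [hpe]

lemma fval2 (hN : 0 < N) (p : SIdx) :
    fmap N (m2 N p) = (kz N p, N+1, false) := by
  unfold fmap m2
  rw [if_neg (show ¬ (-(N+1) = 0) by omega), if_neg (show ¬ (0 < -(N+1)) by omega)]
  refine Prod.ext (Subtype.ext ?_) rfl
  show -(mz N p).val = (kz N p).val
  simp [mz, kz]

lemma fval3 (p : SIdx) : fmap N (m3 N p) = m3 N p := by
  simp [fmap, m3]

lemma kzv (p : SIdx) : (kz N p).val = kap N p := rfl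
lemma mzv (p : SIdx) : (mz N p).val = -kap N p := rfl

lemma fmap_injOn (hN : 0 < N) : Set.InjOn (fmap N) (src N) := by
  rintro a ((⟨p, hp, rfl⟩ | ⟨p, hp, rfl⟩) | ⟨p, hp, rfl⟩)
    b ((⟨q, hq, rfl⟩ | ⟨q, hq, rfl⟩) | ⟨q, hq, rfl⟩) hf
  · rw [fval1 hN hp, fval1 hN hq] at hf
    rw [kap_injOn hN hp hq (congrArg (fun t : SIdx => t.1.val) hf)]
  · rw [fval1 hN hp, fval2 hN q] at hf
    have h2 := congrArg (fun t : SIdx => t.2.1) hf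
    simp only at h2; omega
  · rw [fval1 hN hp, fval3] at hf
    have h2 := congrArg (fun t : SIdx => t.1.val) hf
    simp only [m3, kzv, mzv] at h2
    have := kap_pos N p; have := kap_pos N q; omega
  · rw [fval2 hN p, fval1 hN hq] at hf
    have h2 := congrArg (fun t : SIdx => t.2.1) hf
    simp only at h2; omega
  · rw [fval2 hN p, fval2 hN q] at hf
    have h1 : kap N p = kap N q := congrArg (fun t : SIdx => t.1.val) hf
    rw [kap_injOn hN hp hq h1]
  · rw [fval2 hN p, fval3] at hf
    have h2 := congrArg (fun t : SIdx => t.2.1) hf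
    simp only [m3] at h2; omega
  · rw [fval3, fval1 hN hq] at hf
    have h2 := congrArg (fun t : SIdx => t.1.val) hf
    simp only [m3, kzv, mzv] at h2
    have := kap_pos N p; have := kap_pos N q; omega
  · rw [fval3, fval2 hN q] at hf
    have h2 := congrArg (fun t : SIdx => t.2.1) hf
    simp only [m3] at h2; omega
  · rw [fval3, fval3] at hf; exact hf

lemma box_finite (N : ℤ) : (BoxS N).Finite := by
  have h : BoxS N = (fun p : SIdx => (p.1.val, p.2.1, p.2.2)) ⁻¹'
      ((Set.Icc (-N) N) ×ˢ (Set.Icc (-N) N) ×ˢ (Set.univ : Set Bool)) := by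
    ext p
    simp [BoxS, InSN]
  rw [h]
  apply Set.Finite.preimage
  · intro a _ b _ hab
    obtain ⟨⟨j1, hj1⟩, l1, b1⟩ := a
    obtain ⟨⟨j2, hj2⟩, l2, b2⟩ := b
    simp only [Prod.mk.injEq] at hab
    exact Prod.ext (Subtype.ext hab.1) (Prod.ext hab.2.1 hab.2.2)
  · exact ((Set.finite_Icc _ _).prod ((Set.finite_Icc _ _).prod Set.finite_univ))

lemma src_finite (N : ℤ) : (src N).Finite :=
  (((box_finite N).image _).union ((box_finite N).image _)).union ((box_finite N).image _)

end
end Stmt13Aux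

instance : Nonempty SIdx := ⟨(⟨1, one_ne_zero⟩, 0, false)⟩

open Stmt13Aux

/-- Lemma "vertical": for any `θ, θ̃` and any `N > 0` there are a finite
partial bijection `ι^{vert}` of the index set, independent from `(S_N, S̃_N)`, and a finite
`X ⊂ ℤ*` with `(v_j, ṽ_j) ∈ ι^{vert}` for all `j ∈ X`, such that for every tuple `ω` whose
`ι` extends `ι^{vert}` there is `h ∈ G(ω)` conjugating every element of `S_N` into
`⟨{v_j : j ∈ X}⟩`. -/
theorem stmt13 (θ θt : Equiv.Perm Zstar) (N : ℤ) (hN : 0 < N) :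
    ∃ (ιv : PartialEquiv SIdx SIdx) (X : Finset Zstar),
      ιv.source.Finite ∧
      IndepFromSN ιv N ∧
      (∀ jx ∈ X, ((jx, (0 : ℤ), false) : SIdx) ∈ ιv.source ∧
        ιv (jx, (0 : ℤ), false) = (jx, (0 : ℤ), false)) ∧
      ∀ ω : OmegaTuple, ω.θ = θ → ω.θt = θt → Extends ω.ι ιv →
        ∃ h : GroupOmega ω, ∀ p : SIdx, InSN N p →
          h⁻¹ * ofb ω (sElem ω.ρ ω.θ p) * h ∈
            Subgroup.closure ((fun jx : Zstar => ofb ω (vgen ω.ρ jx 0)) '' (X : Set Zstar)) := by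
  classical
  refine ⟨Set.InjOn.toPartialEquiv (fmap N) (src N) (fmap_injOn hN),
    ((box_finite N).image (mz N)).toFinset, ?_, ?_, ?_, ?_⟩
  · exact src_finite N
  · constructor
    · intro q hq
      rcases hq with ((⟨p, hp, rfl⟩ | ⟨p, hp, rfl⟩) | ⟨p, hp, rfl⟩) <;>
        obtain ⟨b1, b2, b3, b4⟩ := box_spec hp
      · rintro ⟨-, h2⟩
        simp only [sh1, Set.mem_Icc] at h2; omega
      · rintro ⟨-, h2⟩
        simp only [m2, Set.mem_Icc] at h2; omega
      · rintro ⟨h1, -⟩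
        have := kap_big hN hp
        simp only [m3, mzv, Set.mem_Icc] at h1; omega
    · intro q hq
      rcases hq with ⟨a, ((⟨p, hp, rfl⟩ | ⟨p, hp, rfl⟩) | ⟨p, hp, rfl⟩), rfl⟩ <;>
        obtain ⟨b1, b2, b3, b4⟩ := box_spec hp <;> have := kap_big hN hp
      · rw [fval1 hN hp]
        rintro ⟨h1, -⟩
        simp only [kzv, Set.mem_Icc] at h1; omega
      · rw [fval2 hN p]
        rintro ⟨-, h2⟩
        simp only [Set.mem_Icc] at h2; omega
      · rw [fval3]
        rintro ⟨h1, -⟩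
        simp only [m3, mzv, Set.mem_Icc] at h1; omega
  · intro jx hjx
    rw [Set.Finite.mem_toFinset] at hjx
    obtain ⟨p, hp, rfl⟩ := hjx
    constructor
    · exact Or.inr (Set.mem_image_of_mem _ hp)
    · show fmap N (mz N p, 0, false) = (mz N p, 0, false)
      exact fval3 p
  · intro ω hθ hθt hExt
    refine ⟨ofb ω (gz ^ (2*N+1)) * oft ω (gz ^ (N+1)) * ofb ω (gz ^ (N+1)), ?_⟩
    intro p hp
    replace hp : p ∈ BoxS N := hp
    have hι1 : ω.ι (sh1 N p) = (kz N p, 0, false) := by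
      rw [hExt _ (Or.inl (Or.inl (Set.mem_image_of_mem _ hp)))]
      exact fval1 hN hp
    have hι2 : ω.ι (m2 N p) = (kz N p, N+1, false) := by
      rw [hExt _ (Or.inl (Or.inr (Set.mem_image_of_mem _ hp)))]
      exact fval2 hN p
    have e1 : ofb ω (sElem ω.ρ ω.θ (sh1 N p))
        = oft ω (sElem ω.ρt ω.θt (kz N p, 0, false)) := by
      rw [push_rel, hι1]
    have e2 : ofb ω (sElem ω.ρ ω.θ (m2 N p))
        = oft ω (sElem ω.ρt ω.θt (kz N p, N+1, false)) := by
      rw [push_rel, hι2]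
    have c1 : (gz ^ (2*N+1))⁻¹ * sElem ω.ρ ω.θ p * gz ^ (2*N+1)
        = sElem ω.ρ ω.θ (sh1 N p) := conj_sElem ω.ρ ω.θ p (2*N+1)
    have c2 : (gz ^ (N+1))⁻¹ * sElem ω.ρt ω.θt (kz N p, 0, false) * gz ^ (N+1)
        = sElem ω.ρt ω.θt (kz N p, N+1, false) := by
      have := conj_sElem ω.ρt ω.θt (kz N p, 0, false) (N+1)
      simpa using this
    have c3 : (gz ^ (N+1))⁻¹ * sElem ω.ρ ω.θ (m2 N p) * gz ^ (N+1)
        = sElem ω.ρ ω.θ (mz N p, 0, false) := by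
      have h := conj_sElem ω.ρ ω.θ (m2 N p) (N+1)
      have h2 : (((m2 N p).1, (m2 N p).2.1 + (N+1), (m2 N p).2.2) : SIdx)
          = ((mz N p : Zstar), (0:ℤ), false) :=
        Prod.ext rfl (Prod.ext (show -(N+1)+(N+1) = (0:ℤ) by ring) rfl)
      rw [h2] at h; exact h
    have k1 : (ofb ω (gz ^ (2*N+1)))⁻¹ * ofb ω (sElem ω.ρ ω.θ p) * ofb ω (gz ^ (2*N+1))
        = oft ω (sElem ω.ρt ω.θt (kz N p, 0, false)) := by
      rw [← map_inv, ← map_mul, ← map_mul, c1, e1]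
    have k2 : (oft ω (gz ^ (N+1)))⁻¹ * oft ω (sElem ω.ρt ω.θt (kz N p, 0, false))
          * oft ω (gz ^ (N+1))
        = ofb ω (sElem ω.ρ ω.θ (m2 N p)) := by
      rw [← map_inv, ← map_mul, ← map_mul, c2, ← e2]
    have k3 : (ofb ω (gz ^ (N+1)))⁻¹ * ofb ω (sElem ω.ρ ω.θ (m2 N p)) * ofb ω (gz ^ (N+1))
        = ofb ω (sElem ω.ρ ω.θ (mz N p, 0, false)) := by
      rw [← map_inv, ← map_mul, ← map_mul, c3]
    have key : (ofb ω (gz ^ (2*N+1)) * oft ω (gz ^ (N+1)) * ofb ω (gz ^ (N+1)))⁻¹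
          * ofb ω (sElem ω.ρ ω.θ p)
          * (ofb ω (gz ^ (2*N+1)) * oft ω (gz ^ (N+1)) * ofb ω (gz ^ (N+1)))
        = ofb ω (sElem ω.ρ ω.θ (mz N p, 0, false)) := by
      calc (ofb ω (gz ^ (2*N+1)) * oft ω (gz ^ (N+1)) * ofb ω (gz ^ (N+1)))⁻¹
          * ofb ω (sElem ω.ρ ω.θ p)
          * (ofb ω (gz ^ (2*N+1)) * oft ω (gz ^ (N+1)) * ofb ω (gz ^ (N+1)))
          = (ofb ω (gz ^ (N+1)))⁻¹ * ((oft ω (gz ^ (N+1)))⁻¹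
              * ((ofb ω (gz ^ (2*N+1)))⁻¹ * ofb ω (sElem ω.ρ ω.θ p) * ofb ω (gz ^ (2*N+1)))
              * oft ω (gz ^ (N+1))) * ofb ω (gz ^ (N+1)) := by group
        _ = (ofb ω (gz ^ (N+1)))⁻¹ * ((oft ω (gz ^ (N+1)))⁻¹
              * oft ω (sElem ω.ρt ω.θt (kz N p, 0, false))
              * oft ω (gz ^ (N+1))) * ofb ω (gz ^ (N+1)) := by rw [k1]
        _ = (ofb ω (gz ^ (N+1)))⁻¹ * ofb ω (sElem ω.ρ ω.θ (m2 N p))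
              * ofb ω (gz ^ (N+1)) := by rw [← k2]
        _ = ofb ω (sElem ω.ρ ω.θ (mz N p, 0, false)) := k3
    rw [key]
    have hv : sElem ω.ρ ω.θ (mz N p, 0, false) = vgen ω.ρ (mz N p) 0 := by
      simp [sElem]
    rw [hv]
    apply Subgroup.subset_closure
    refine ⟨mz N p, ?_, rfl⟩
    rw [Set.Finite.coe_toFinset]
    exact Set.mem_image_of_mem _ hp
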